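/- Paillier decryption correctness for g = 1+n: if gcd(m·λ, n) behaves as required, then L((1+n)^{mλ} mod n²)·μ ≡ m (mod n), where L(x) = (x-1)/n and μ = (L((1+n)^λ mod n²))⁻¹ mod n = λ⁻¹ mod n. -/
import Mathlib

lemma pow_one_add_mod (n : ℕ) (hn : 2 ≤ n) (k : ℕ) :
    (1 + n) ^ k % n ^ 2 = 1 + n * (k % n) := by
  have hn2 : 1 < n ^ 2 := one_lt_pow₀ (by omega) (by norm_num)
  induction k with
  | zero => simp [Nat.mod_eq_of_lt hn2]
  | succ k ih =>
    have h1 : (1 + n) ^ (k + 1) % n ^ 2 = ((1 + n) ^ k % n ^ 2) * (1 + n) % n ^ 2 := by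
      rw [pow_succ, Nat.mod_mul_mod]
    rw [h1, ih]
    have hk : k % n < n := Nat.mod_lt _ (by omega)
    have hexp : (1 + n * (k % n)) * (1 + n) = 1 + n * (k % n + 1) + n ^ 2 * (k % n) := by
      ring
    rw [hexp, Nat.add_mul_mod_self_left]
    rcases Nat.lt_or_ge (k % n + 1) n with h | h
    · have hsucc : (k + 1) % n = k % n + 1 := by
        rw [Nat.add_mod, Nat.mod_eq_of_lt (by omega : 1 < n), Nat.mod_eq_of_lt h]
      rw [hsucc, Nat.mod_eq_of_lt]
      nlinarith
    · have heq : k % n + 1 = n := by omega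
      have hsucc : (k + 1) % n = 0 := by
        rw [Nat.add_mod, Nat.mod_eq_of_lt (by omega : 1 < n), heq, Nat.mod_self]
      rw [heq, hsucc, ← pow_two, Nat.add_mod_right, Nat.mod_eq_of_lt hn2]
      ring

theorem paillier_decryption_correct (n lam m : ℕ) (hn : 2 ≤ n)
    (hco : Nat.Coprime lam n) (hm : m < n) :
    ((((1 + n) ^ (m * lam) % n ^ 2 - 1) / n : ℕ) : ZMod n) * (lam : ZMod n)⁻¹
      = (m : ZMod n) := by
  rw [pow_one_add_mod n hn]
  have h1 : (1 + n * (m * lam % n) - 1) / n = m * lam % n := by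
    simp [Nat.mul_div_cancel_left _ (by omega : 0 < n)]
  rw [h1]
  have hcast : ((m * lam % n : ℕ) : ZMod n) = (m : ZMod n) * (lam : ZMod n) := by
    rw [ZMod.natCast_mod, Nat.cast_mul]
  rw [hcast, mul_assoc, ZMod.mul_inv_of_unit, mul_one]
  exact (ZMod.unitOfCoprime lam hco).isUnit
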